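/- Let X be a quasigeodesic metric space (for example, a connected graph with its path metric) that is not coarsely equivalent to any metric space with bounded geometry. Then the coarse entropy of X is infinite: h_∞(X) = ∞. -/

import Mathlib

open Filter Set Metric
open scoped ENNReal

noncomputable section

/-- `p` represents a `δ`-pseudoorbit of `f` of length `n` starting at `x₀`:
`(p 0, p 1, …, p n)` with `p 0 = x₀` and `dist (f (p i)) (p (i+1)) ≤ δ` for `i < n`.
(Only the values `p 0, …, p n` are relevant.) -/
def IsPseudoOrbit {X : Type*} [MetricSpace X] (f : X → X) (δ : ℝ) (n : ℕ) (x₀ : X)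
    (p : ℕ → X) : Prop :=
  p 0 = x₀ ∧ ∀ i < n, dist (f (p i)) (p (i + 1)) ≤ δ

/-- The distance between two pseudoorbits of length `n`:
the maximum of `dist (p i) (q i)` over `0 ≤ i ≤ n`. -/
def orbitDist {X : Type*} [MetricSpace X] (n : ℕ) (p q : ℕ → X) : ℝ :=
  (Finset.range (n + 1)).sup' (by simp) fun i => dist (p i) (q i)

/-- A family `S` of pseudoorbits of length `n` is `R`-separated if any two distinct
members are at pseudoorbit distance at least `R`. -/
def IsSepFamily {X : Type*} [MetricSpace X] (n : ℕ) (R : ℝ) (S : Set (ℕ → X)) : Prop :=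
  ∀ p ∈ S, ∀ q ∈ S, p ≠ q → R ≤ orbitDist n p q

/-- `sepCard f n R δ x₀` is `s(f,n,R,δ,x₀)`: the supremum of cardinalities of
`R`-separated sets of `δ`-pseudoorbits of `f` of length `n` starting at `x₀`. -/
def sepCard {X : Type*} [MetricSpace X] (f : X → X) (n : ℕ) (R δ : ℝ) (x₀ : X) : ℝ≥0∞ :=
  ⨆ (S : Set (ℕ → X)) (_ : ∀ p ∈ S, IsPseudoOrbit f δ n x₀ p) (_ : IsSepFamily n R S),
    (S.encard : ℝ≥0∞)

/-- Extended logarithm `[0,∞] → [0,∞]` (negative values are truncated to `0`). -/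
def elog (x : ℝ≥0∞) : ℝ≥0∞ :=
  if x = ⊤ then ⊤ else ENNReal.ofReal (Real.log x.toReal)

/-- The coarse entropy of `f : X → X` computed at the basepoint `x₀`:
`h_∞(f) = lim_{δ→∞} lim_{R→∞} limsup_{n→∞} (1/n) log s(f,n,R,δ,x₀)`.
Since `s` is nondecreasing in `δ` and nonincreasing in `R`, the limits in `δ` and `R`
are the supremum over `δ > 0` and the infimum over `R > 0`, respectively. -/
def coarseEntropyAt {X : Type*} [MetricSpace X] (f : X → X) (x₀ : X) : ℝ≥0∞ :=
  ⨆ (δ : ℝ) (_ : 0 < δ), ⨅ (R : ℝ) (_ : 0 < R),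
    Filter.atTop.limsup fun n : ℕ => elog (sepCard f n R δ x₀) / (n : ℝ≥0∞)

end

/-- A metric space `X` is quasigeodesic. -/
def IsQuasiGeodesicSpace (X : Type*) [MetricSpace X] : Prop :=
  ∃ C A : ℝ, 1 ≤ C ∧ 0 ≤ A ∧ ∀ x x' : X, ∃ p : ℝ → X,
    p 0 = x ∧ p (dist x x') = x' ∧
    ∀ s ∈ Set.Icc (0 : ℝ) (dist x x'), ∀ t ∈ Set.Icc (0 : ℝ) (dist x x'),
      C⁻¹ * |s - t| - A ≤ dist (p s) (p t) ∧ dist (p s) (p t) ≤ C * |s - t| + A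

/-- A metric space has bounded geometry if for every radius `r > 0` there is a uniform
bound `C(r) ∈ ℕ` on the cardinalities of closed balls of radius `r`. -/
def HasBoundedGeometry (X : Type*) [MetricSpace X] : Prop :=
  ∀ r : ℝ, 0 < r → ∃ C : ℕ, ∀ x : X, (Metric.closedBall x r).encard ≤ C

/-- `f : X → Y` is a coarse embedding. -/
def IsCoarseEmbedding {X Y : Type*} [MetricSpace X] [MetricSpace Y] (f : X → Y) : Prop :=
  ∃ ρminus ρplus : ℝ → ℝ, Monotone ρminus ∧ Monotone ρplus ∧
    Filter.Tendsto ρminus Filter.atTop Filter.atTop ∧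
    ∀ x x' : X, ρminus (dist x x') ≤ dist (f x) (f x') ∧
      dist (f x) (f x') ≤ ρplus (dist x x')

/-- `f : X → Y` is a coarse equivalence: a coarse embedding with coarsely dense image. -/
def IsCoarseEquiv {X Y : Type*} [MetricSpace X] [MetricSpace Y] (f : X → Y) : Prop :=
  IsCoarseEmbedding f ∧ ∃ A : ℝ, 0 ≤ A ∧ ∀ y : Y, ∃ x : X, dist y (f x) < A

theorem aux_bg {X : Type u} [MetricSpace X] (ε : ℝ) (hε : 0 < ε)
    (hb : ∀ r : ℝ, 0 < r → ∃ N : ℕ, ∀ (x : X) (s : Set X), s ⊆ Metric.closedBall x r →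
      (∀ a ∈ s, ∀ b ∈ s, a ≠ b → ε ≤ dist a b) → s.encard ≤ N) :
    ∃ (Y : Type u) (mY : MetricSpace Y), @HasBoundedGeometry Y mY ∧
      ∃ f : X → Y, @IsCoarseEquiv X Y _ mY f := by
  classical
  set Sep : Set (Set X) := {s | ∀ a ∈ s, ∀ b ∈ s, a ≠ b → ε ≤ dist a b} with hSep
  have hzorn : ∃ m, (∅ : Set X) ⊆ m ∧ Maximal (· ∈ Sep) m := by
    apply zorn_subset_nonempty
    · intro c hcS hchain hcne
      refine ⟨⋃₀ c, ?_, fun s hs => subset_sUnion_of_mem hs⟩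
      intro a ha b hb hab
      obtain ⟨s₁, hs₁, ha1⟩ := ha
      obtain ⟨s₂, hs₂, hb2⟩ := hb
      rcases hchain.total hs₁ hs₂ with hsub | hsub
      · exact hcS hs₂ a (hsub ha1) b hb2 hab
      · exact hcS hs₁ a ha1 b (hsub hb2) hab
    · intro a ha; simp at ha
  obtain ⟨s, -, hs⟩ := hzorn
  have hssep : ∀ a ∈ s, ∀ b ∈ s, a ≠ b → ε ≤ dist a b := hs.1
  have near : ∀ x : X, ∃ y ∈ s, dist x y < ε := by
    intro x
    by_contra hcon
    push_neg at hcon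
    have hins : insert x s ∈ Sep := by
      intro a ha b hb hab
      rcases Set.mem_insert_iff.1 ha with rfl | ha'
      · rcases Set.mem_insert_iff.1 hb with rfl | hb'
        · exact absurd rfl hab
        · exact hcon b hb'
      · rcases Set.mem_insert_iff.1 hb with rfl | hb'
        · rw [dist_comm]; exact hcon a ha'
        · exact hssep a ha' b hb' hab
    have hxs : x ∈ s := hs.2 hins (Set.subset_insert x s) (Set.mem_insert x s)
    have := hcon x hxs
    simp at this
    linarith
  choose g hg hg' using near
  refine ⟨↥s, inferInstance, ?_, fun x => ⟨g x, hg x⟩, ?_, ?_⟩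
  · intro r hr
    obtain ⟨N, hN⟩ := hb r hr
    refine ⟨N, fun y => ?_⟩
    have himg : (Subtype.val '' (Metric.closedBall y r : Set ↥s)).encard
        = (Metric.closedBall y r : Set ↥s).encard :=
      Subtype.val_injective.encard_image _
    rw [← himg]
    apply hN (y : X)
    · rintro a ⟨w, hw, rfl⟩
      rw [Metric.mem_closedBall] at hw ⊢
      rwa [Subtype.dist_eq] at hw
    · rintro a ⟨w, hw, rfl⟩ b ⟨v, hv, rfl⟩ hab
      exact hssep _ w.2 _ v.2 hab
  · refine ⟨fun t => t - 2 * ε, fun t => t + 2 * ε, fun u v huv => by dsimp; linarith,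
      fun u v huv => by dsimp; linarith, ?_, ?_⟩
    · simpa [sub_eq_add_neg] using tendsto_atTop_add_const_right atTop (-(2 * ε)) tendsto_id
    · intro x x'
      have hd : dist (⟨g x, hg x⟩ : ↥s) ⟨g x', hg x'⟩ = dist (g x) (g x') := rfl
      have h1 : dist (g x) (g x') ≤ dist (g x) x + dist x x' + dist x' (g x') :=
        dist_triangle4 _ _ _ _
      have h2 : dist x x' ≤ dist x (g x) + dist (g x) (g x') + dist (g x') x' :=
        dist_triangle4 _ _ _ _
      have e1 := hg' x
      have e2 := hg' x'
      rw [dist_comm (g x) x] at h1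
      rw [dist_comm (g x') x'] at h2
      constructor
      · rw [hd]; dsimp only; linarith
      · rw [hd]; dsimp only; linarith
  · refine ⟨ε + 1, by linarith, fun y => ⟨(y : X), ?_⟩⟩
    have : dist y (⟨g (y : X), hg _⟩ : ↥s) = dist (y : X) (g (y : X)) := rfl
    rw [this]
    have := hg' (y : X)
    linarith

theorem aux_path {X : Type*} [MetricSpace X] {C A : ℝ} (hC : 1 ≤ C) (hA : 0 ≤ A)
    (hq : ∀ x x' : X, ∃ p : ℝ → X,
      p 0 = x ∧ p (dist x x') = x' ∧
      ∀ s ∈ Set.Icc (0 : ℝ) (dist x x'), ∀ t ∈ Set.Icc (0 : ℝ) (dist x x'),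
        C⁻¹ * |s - t| - A ≤ dist (p s) (p t) ∧ dist (p s) (p t) ≤ C * |s - t| + A)
    (x x' : X) (k : ℕ) (hk : dist x x' ≤ k) :
    ∃ q : ℕ → X, q 0 = x ∧ (∀ i, k ≤ i → q i = x') ∧
      ∀ i, dist (q i) (q (i + 1)) ≤ C + A := by
  obtain ⟨p, h0, hd, hb⟩ := hq x x'
  set d := dist x x' with hdd
  have hd0 : 0 ≤ d := dist_nonneg
  refine ⟨fun i => p (min (i : ℝ) d), ?_, ?_, ?_⟩
  · simp [min_eq_left hd0, h0]
  · intro i hi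
    have : min (i : ℝ) d = d := min_eq_right (hk.trans (by exact_mod_cast hi))
    dsimp only
    rw [this, hd]
  · intro i
    set a := min (i : ℝ) d with ha
    set b := min ((i : ℝ) + 1) d with hbdef
    have hab : a ≤ b := min_le_min (by linarith) le_rfl
    have hba : b - a ≤ 1 := by
      rcases le_total ((i : ℝ)) d with h | h
      · have : a = (i : ℝ) := min_eq_left h
        have hb1 : b ≤ (i : ℝ) + 1 := min_le_left _ _
        linarith
      · have : a = d := min_eq_right h
        have hb1 : b ≤ d := min_le_right _ _
        linarith
    have hmem1 : a ∈ Set.Icc (0 : ℝ) d := ⟨le_min (Nat.cast_nonneg i) hd0, min_le_right _ _⟩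
    have hmem2 : b ∈ Set.Icc (0 : ℝ) d := ⟨le_min (by positivity) hd0, min_le_right _ _⟩
    have := (hb a hmem1 b hmem2).2
    have habs : |a - b| ≤ 1 := by rw [abs_sub_comm, abs_le]; constructor <;> linarith
    have hCpos : (0 : ℝ) ≤ C := by linarith
    have : dist (p a) (p b) ≤ C * 1 + A := by
      have := mul_le_mul_of_nonneg_left habs hCpos
      linarith
    have hcast : ((i + 1 : ℕ) : ℝ) = (i : ℝ) + 1 := by push_cast; ring
    have hfin : dist (p a) (p b) ≤ C + A := by linarith
    dsimp only
    rw [hcast]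
    exact hfin
  
theorem aux_chain {X : Type*} [MetricSpace X] {C A : ℝ} (hCA : 0 ≤ C + A)
    (hstep : ∀ (x x' : X) (k : ℕ), dist x x' ≤ k → ∃ q : ℕ → X, q 0 = x ∧
      (∀ i, k ≤ i → q i = x') ∧ ∀ i, dist (q i) (q (i + 1)) ≤ C + A)
    (b : ℕ) (z : ℕ → X) (t : ℕ → ℕ) (hmono : ∀ j, t j < t (j + 1))
    (hd : ∀ j < b, dist (z j) (z (j + 1)) ≤ ((t (j + 1) - t j : ℕ) : ℝ)) :
    ∃ P : ℕ → X, (∀ j ≤ b, P (t j) = z j) ∧ (∀ i, t b ≤ i → P i = z b) ∧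
      ∀ i, dist (P i) (P (i + 1)) ≤ C + A := by
  induction b with
  | zero =>
      refine ⟨fun _ => z 0, fun j hj => by simp [Nat.le_zero.1 hj], fun i _ => rfl,
        fun i => by simp [hCA]⟩
  | succ b ih =>
      obtain ⟨P, hP1, hP2, hP3⟩ := ih (fun j hj => hd j (hj.trans (Nat.lt_succ_self b)))
      obtain ⟨seg, hs0, hs1, hs3⟩ := hstep (z b) (z (b + 1)) (t (b + 1) - t b)
        (hd b (Nat.lt_succ_self b))
      refine ⟨fun i => if i ≤ t b then P i else seg (i - t b), ?_, ?_, ?_⟩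
      · intro j hj
        rcases Nat.lt_succ_iff_lt_or_eq.1 (Nat.lt_succ_of_le hj) with hj' | rfl
        · have hjb : j ≤ b := Nat.lt_succ_iff.1 hj'
          have htj : t j ≤ t b := by
            have : Monotone t := monotone_nat_of_le_succ fun n => (hmono n).le
            exact this hjb
          simp only [if_pos htj]
          exact hP1 j hjb
        · have hlt : t b < t (b + 1) := hmono b
          simp only [if_neg (not_le.2 hlt)]
          exact hs1 _ (le_refl _)
      · intro i hi
        have hlt : t b < t (b + 1) := hmono b
        have hbi : t b < i := lt_of_lt_of_le hlt hi
        simp only [if_neg (not_le.2 hbi)]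
        exact hs1 _ (Nat.sub_le_sub_right hi (t b))
      · intro i
        rcases lt_trichotomy i (t b) with hlt | heq | hgt
        · have h1 : i ≤ t b := hlt.le
          have h2 : i + 1 ≤ t b := hlt
          simp only [if_pos h1, if_pos h2]
          exact hP3 i
        · rw [heq]
          have h2 : ¬ (t b + 1 ≤ t b) := by omega
          dsimp only
          rw [if_pos (le_refl (t b)), if_neg h2]
          have h3 : t b + 1 - t b = 1 := by omega
          rw [h3]
          have hPi : P (t b) = z b := hP1 b (le_refl b)
          rw [hPi, ← hs0]
          exact hs3 0
        · have h1 : ¬ (i ≤ t b) := not_le.2 hgt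
          have h2 : ¬ (i + 1 ≤ t b) := by omega
          simp only [if_neg h1, if_neg h2]
          have : i + 1 - t b = (i - t b) + 1 := by omega
          rw [this]
          exact hs3 _


theorem aux_count {X : Type*} [MetricSpace X] (x₀ y : X) {C A : ℝ} (hCA0 : (0:ℝ) ≤ C + A)
    (hstep : ∀ (x x' : X) (k : ℕ), dist x x' ≤ k → ∃ q : ℕ → X, q 0 = x ∧
      (∀ i, k ≤ i → q i = x') ∧ ∀ i, dist (q i) (q (i + 1)) ≤ C + A)
    (R r : ℝ) (F : Finset X) (hFball : ↑F ⊆ Metric.closedBall y r)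
    (hFsep : ∀ a ∈ F, ∀ b ∈ F, a ≠ b → R ≤ dist a b)
    (L m b n : ℕ) (hLpos : 0 < L) (hLr : 2 * r ≤ (L : ℝ))
    (hm1 : 1 ≤ m) (hmr : dist x₀ y + r ≤ (m : ℝ))
    (hbL : m + b * L ≤ n) :
    ((F.card ^ b : ℕ) : ℝ≥0∞) ≤ sepCard id n R (C + A) x₀ := by
  classical
  -- checkpoint times
  set t : ℕ → ℕ := fun j => if j = 0 then 0 else m + (j - 1) * L with htdef
  have ht0 : t 0 = 0 := by simp [htdef]
  have ht1 : ∀ j : ℕ, t (j + 1) = m + j * L := by intro j; simp [htdef]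
  have htmono : ∀ j, t j < t (j + 1) := by
    intro j
    cases j with
    | zero => rw [ht0, ht1]; omega
    | succ j =>
        rw [ht1, ht1]
        apply Nat.add_lt_add_left
        calc j * L < j * L + L := Nat.lt_add_of_pos_right hLpos
        _ = (j + 1) * L := by ring
  have htdiff : ∀ j : ℕ, t (j + 1 + 1) - t (j + 1) = L := by
    intro j
    rw [ht1, ht1]
    have : m + (j + 1) * L = (m + j * L) + L := by ring
    rw [this, Nat.add_sub_cancel_left]
  -- checkpoints
  set z : (Fin b → {v // v ∈ F}) → ℕ → X := fun w j =>
    if h : 1 ≤ j ∧ j - 1 < b then ((w ⟨j - 1, h.2⟩ : {v // v ∈ F}) : X) else x₀ with hzdef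
  have hz0 : ∀ w, z w 0 = x₀ := by
    intro w; rw [hzdef]; exact dif_neg (by omega)
  have hz : ∀ (w : Fin b → {v // v ∈ F}) (j : ℕ) (hj : j < b),
      z w (j + 1) = ((w ⟨j, hj⟩ : {v // v ∈ F}) : X) := by
    intro w j hj
    have hcond : 1 ≤ j + 1 ∧ (j + 1) - 1 < b := ⟨by omega, by simpa using hj⟩
    rw [hzdef]
    show (if h : 1 ≤ j + 1 ∧ (j + 1) - 1 < b then ((w ⟨(j + 1) - 1, h.2⟩ : {v // v ∈ F}) : X)
      else x₀) = _
    rw [dif_pos hcond]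
    congr 1
  have hball : ∀ (v : {u // u ∈ F}), dist (v : X) y ≤ r := by
    intro v
    exact Metric.mem_closedBall.1 (hFball (Finset.mem_coe.2 v.2))
  have hd : ∀ (w : Fin b → {v // v ∈ F}), ∀ j < b,
      dist (z w j) (z w (j + 1)) ≤ ((t (j + 1) - t j : ℕ) : ℝ) := by
    intro w j hj
    cases j with
    | zero =>
        rw [ht0, ht1, hz0 w, hz w 0 hj]
        have h1 := hball (w ⟨0, hj⟩)
        have h2 := dist_triangle x₀ y ((w ⟨0, hj⟩ : {v // v ∈ F}) : X)
        have h3 := dist_comm y ((w ⟨0, hj⟩ : {v // v ∈ F}) : X)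
        have h4 : ((m + 0 * L - 0 : ℕ) : ℝ) = (m : ℝ) := by norm_num
        rw [h4]
        linarith
    | succ j =>
        rw [htdiff j, hz w j (Nat.lt_of_succ_lt hj), hz w (j + 1) hj]
        have h1 := hball (w ⟨j, Nat.lt_of_succ_lt hj⟩)
        have h2 := hball (w ⟨j + 1, hj⟩)
        have h3 := dist_triangle ((w ⟨j, Nat.lt_of_succ_lt hj⟩ : {v // v ∈ F}) : X) y
          ((w ⟨j + 1, hj⟩ : {v // v ∈ F}) : X)
        have h4 := dist_comm y ((w ⟨j + 1, hj⟩ : {v // v ∈ F}) : X)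
        linarith
  -- build the pseudoorbits
  have hchain := fun w : Fin b → {v // v ∈ F} =>
    aux_chain hCA0 hstep b (z w) t htmono (hd w)
  choose P hP1 hP2 hP3 using hchain
  have hPstart : ∀ w, P w 0 = x₀ := by
    intro w
    have := hP1 w 0 (Nat.zero_le b)
    rw [ht0] at this
    rw [this, hz0]
  have hPval : ∀ (w : Fin b → {v // v ∈ F}) (j : Fin b),
      P w (m + (j : ℕ) * L) = ((w j : {v // v ∈ F}) : X) := by
    intro w j
    have h := hP1 w ((j : ℕ) + 1) j.isLt
    rw [ht1, hz w (j : ℕ) j.isLt] at h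
    simpa using h
  set S : Set (ℕ → X) := Set.range P with hSdef
  have hvalid : ∀ p ∈ S, IsPseudoOrbit id (C + A) n x₀ p := by
    rintro p ⟨w, rfl⟩
    exact ⟨hPstart w, fun i _ => by simpa using hP3 w i⟩
  have hidx : ∀ j : Fin b, m + (j : ℕ) * L ≤ n := by
    intro j
    have : (j : ℕ) * L ≤ b * L := Nat.mul_le_mul_right L j.isLt.le
    exact le_trans (Nat.add_le_add_left this m) hbL
  have hsepfam : IsSepFamily n R S := by
    rintro p ⟨w, rfl⟩ q ⟨w', rfl⟩ hne
    have hww : w ≠ w' := fun hh => hne (by rw [hh])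
    obtain ⟨j, hj⟩ := Function.ne_iff.1 hww
    have hvne : ((w j : {v // v ∈ F}) : X) ≠ ((w' j : {v // v ∈ F}) : X) :=
      fun hval => hj (Subtype.ext hval)
    have hdist : R ≤ dist (P w (m + (j : ℕ) * L)) (P w' (m + (j : ℕ) * L)) := by
      rw [hPval w j, hPval w' j]
      exact hFsep _ (w j).2 _ (w' j).2 hvne
    have hle : dist (P w (m + (j : ℕ) * L)) (P w' (m + (j : ℕ) * L)) ≤
        orbitDist n (P w) (P w') := by
      unfold orbitDist
      exact Finset.le_sup' (f := fun i => dist (P w i) (P w' i))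
        (Finset.mem_range.2 (Nat.lt_succ_of_le (hidx j)))
    linarith
  have hinj : Function.Injective P := by
    intro w w' hpq
    funext j
    apply Subtype.ext
    have h := congrFun hpq (m + (j : ℕ) * L)
    rw [hPval w j, hPval w' j] at h
    exact h
  have hcardfun : Fintype.card (Fin b → {v // v ∈ F}) = F.card ^ b := by
    rw [Fintype.card_fun, Fintype.card_coe, Fintype.card_fin]
  have hScard : S.encard = ((F.card ^ b : ℕ) : ℕ∞) := by
    rw [hSdef, ← Set.image_univ, hinj.encard_image, Set.encard_univ,
      ENat.card_eq_coe_fintype_card, hcardfun]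
  have hsc : ((F.card ^ b : ℕ) : ℝ≥0∞) ≤ sepCard id n R (C + A) x₀ := by
    have hcast : ((F.card ^ b : ℕ) : ℝ≥0∞) = ((S.encard : ℕ∞) : ℝ≥0∞) := by
      rw [hScard]; norm_cast
    rw [hcast]
    unfold sepCard
    exact le_iSup_of_le S (le_iSup_of_le hvalid (le_iSup_of_le hsepfam le_rfl))
  exact hsc

theorem aux_limsup_top {X : Type*} [MetricSpace X] (x₀ : X) {C A : ℝ} (hC : 1 ≤ C) (hA : 0 ≤ A)
    (hstep : ∀ (x x' : X) (k : ℕ), dist x x' ≤ k → ∃ q : ℕ → X, q 0 = x ∧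
      (∀ i, k ≤ i → q i = x') ∧ ∀ i, dist (q i) (q (i + 1)) ≤ C + A)
    (R : ℝ) (r : ℝ) (hr : 0 < r)
    (hbig : ∀ N : ℕ, ∃ (y : X) (F : Finset X), (↑F ⊆ Metric.closedBall y r) ∧
      (∀ a ∈ F, ∀ b ∈ F, a ≠ b → R ≤ dist a b) ∧ N ≤ F.card) :
    Filter.atTop.limsup (fun n : ℕ => elog (sepCard id n R (C + A) x₀) / (n : ℝ≥0∞)) = ⊤ := by
  classical
  have hCA0 : (0 : ℝ) ≤ C + A := by linarith
  suffices hM : ∀ M : ℝ, ENNReal.ofReal M ≤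
      Filter.atTop.limsup (fun n : ℕ => elog (sepCard id n R (C + A) x₀) / (n : ℝ≥0∞)) by
    by_contra htop
    set x := Filter.atTop.limsup (fun n : ℕ => elog (sepCard id n R (C + A) x₀) / (n : ℝ≥0∞))
      with hx
    have h1 := hM (x.toReal + 1)
    have h2 := ENNReal.toReal_mono htop h1
    rw [ENNReal.toReal_ofReal (by positivity)] at h2
    linarith
  intro M
  rcases le_or_gt M 0 with hM0 | hM0
  · rw [ENNReal.ofReal_eq_zero.2 hM0]; exact zero_le
  -- parameters
  set L : ℕ := ⌈2 * r⌉₊ + 1 with hLdef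
  have hLpos : 0 < L := Nat.succ_pos _
  have hLr : 2 * r ≤ (L : ℝ) := by
    have := Nat.le_ceil (2 * r)
    rw [hLdef]; push_cast; linarith
  set N : ℕ := max 2 ⌈Real.exp (M * (2 * (L : ℝ)))⌉₊ with hNdef
  have hN2 : 2 ≤ N := le_max_left _ _
  have hexp : Real.exp (M * (2 * (L : ℝ))) ≤ (N : ℝ) := by
    have h1 : (⌈Real.exp (M * (2 * (L : ℝ)))⌉₊ : ℝ) ≤ (N : ℝ) := by
      have h0 : ⌈Real.exp (M * (2 * (L : ℝ)))⌉₊ ≤ N := by rw [hNdef]; exact le_max_right _ _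
      exact_mod_cast h0
    exact (Nat.le_ceil _).trans h1
  have hlogN : M * (2 * (L : ℝ)) ≤ Real.log N :=
    (Real.log_exp (M * (2 * (L : ℝ)))).symm.le.trans (Real.log_le_log (Real.exp_pos _) hexp)
  obtain ⟨y, F, hFball, hFsep, hFcard⟩ := hbig N
  have hFpos : 0 < F.card := by omega
  have hlogF : M * (2 * (L : ℝ)) ≤ Real.log (F.card : ℝ) := by
    refine hlogN.trans (Real.log_le_log ?_ ?_) <;> [skip; exact_mod_cast hFcard]
    have : (0:ℝ) < (N:ℝ) := by exact_mod_cast (by omega : 0 < N)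
    exact this
  set m : ℕ := ⌈dist x₀ y + r⌉₊ + 1 with hmdef
  have hm1 : 1 ≤ m := Nat.succ_le_succ (Nat.zero_le _)
  have hmr : dist x₀ y + r ≤ (m : ℝ) := by
    have := Nat.le_ceil (dist x₀ y + r)
    rw [hmdef]; push_cast; linarith
  -- the eventual bound
  have hev : ∀ n : ℕ, 2 * (m + L) ≤ n → ENNReal.ofReal M ≤
      elog (sepCard id n R (C + A) x₀) / (n : ℝ≥0∞) := by
    intro n hn
    have hmn : m ≤ n := by omega
    set b : ℕ := (n - m) / L with hbdef
    have hq1 : b * L ≤ n - m := by rw [hbdef]; exact Nat.div_mul_le_self _ _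
    have hbL : m + b * L ≤ n :=
      le_trans (Nat.add_le_add_left hq1 m) (le_of_eq (Nat.add_sub_cancel' hmn))
    have hdm : L * b + (n - m) % L = n - m := by rw [hbdef]; exact Nat.div_add_mod _ _
    have hmod : (n - m) % L < L := Nat.mod_lt _ hLpos
    have hnb : (n : ℝ) ≤ 2 * (L : ℝ) * (b : ℝ) := by
      have e1 : (L : ℝ) * (b : ℝ) + (((n - m) % L : ℕ) : ℝ) = (n : ℝ) - (m : ℝ) := by
        rw [← Nat.cast_sub hmn]; exact_mod_cast congrArg (Nat.cast : ℕ → ℝ) hdm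
      have e2 : (((n - m) % L : ℕ) : ℝ) < (L : ℝ) := by exact_mod_cast hmod
      have e3 : 2 * ((m : ℝ) + (L : ℝ)) ≤ (n : ℝ) := by exact_mod_cast hn
      have e4 : (1 : ℝ) ≤ (m : ℝ) := by exact_mod_cast hm1
      nlinarith
    have hsc := aux_count x₀ y hCA0 hstep R r F hFball hFsep L m b n hLpos hLr hm1 hmr hbL
    -- numerics
    have hn0 : (n : ℝ≥0∞) ≠ 0 := by
      simp only [ne_eq, Nat.cast_eq_zero]
      omega
    have hnt : (n : ℝ≥0∞) ≠ ⊤ := ENNReal.natCast_ne_top n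
    rcases eq_or_ne (sepCard id n R (C + A) x₀) ⊤ with hstop | hsne
    · rw [hstop, elog, if_pos rfl, ENNReal.top_div_of_ne_top hnt]
      exact le_top
    · have htoR : ((F.card : ℝ)) ^ b ≤ (sepCard id n R (C + A) x₀).toReal := by
        have h := ENNReal.toReal_mono hsne hsc
        rw [ENNReal.toReal_natCast] at h
        exact_mod_cast h
      have hFposR : (0 : ℝ) < (F.card : ℝ) := by exact_mod_cast hFpos
      have h1 : Real.log ((F.card : ℝ) ^ b) ≤ Real.log ((sepCard id n R (C + A) x₀).toReal) :=
        Real.log_le_log (by positivity) htoR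
      rw [Real.log_pow] at h1
      have h3 : M * (n : ℝ) ≤ M * (2 * (L : ℝ) * (b : ℝ)) :=
        mul_le_mul_of_nonneg_left hnb hM0.le
      have h4 : (b : ℝ) * (M * (2 * (L : ℝ))) ≤ (b : ℝ) * Real.log (F.card : ℝ) :=
        mul_le_mul_of_nonneg_left hlogF (Nat.cast_nonneg b)
      have hring : M * (2 * (L : ℝ) * (b : ℝ)) = (b : ℝ) * (M * (2 * (L : ℝ))) := by ring
      have hlog : M * (n : ℝ) ≤ Real.log ((sepCard id n R (C + A) x₀).toReal) := by
        linarith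
      have helog : ENNReal.ofReal (M * (n : ℝ)) ≤ elog (sepCard id n R (C + A) x₀) := by
        rw [elog, if_neg hsne]
        exact ENNReal.ofReal_le_ofReal hlog
      have hMn : ENNReal.ofReal M * (n : ℝ≥0∞) = ENNReal.ofReal (M * (n : ℝ)) := by
        rw [ENNReal.ofReal_mul hM0.le, ENNReal.ofReal_natCast]
      calc ENNReal.ofReal M = ENNReal.ofReal M * (n : ℝ≥0∞) / (n : ℝ≥0∞) := by
            rw [mul_div_assoc, ENNReal.div_self hn0 hnt, mul_one]
      _ = ENNReal.ofReal (M * (n : ℝ)) / (n : ℝ≥0∞) := by rw [hMn]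
      _ ≤ elog (sepCard id n R (C + A) x₀) / (n : ℝ≥0∞) := ENNReal.div_le_div_right helog _
  exact le_limsup_of_frequently_le'
    (((Filter.eventually_ge_atTop (2 * (m + L))).mono hev).frequently)

/-- A quasigeodesic metric space that is not coarsely equivalent to any
metric space with bounded geometry has infinite coarse entropy. -/
theorem coarseEntropy_top_of_not_boundedGeometry {X : Type u} [MetricSpace X]
    (hqg : IsQuasiGeodesicSpace X)
    (h : ¬ ∃ (Y : Type u) (mY : MetricSpace Y), @HasBoundedGeometry Y mY ∧
      ∃ f : X → Y, @IsCoarseEquiv X Y _ mY f)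
    (x₀ : X) :
    coarseEntropyAt (id : X → X) x₀ = ⊤ := by
  classical
  obtain ⟨C, A, hC, hA, hq⟩ := hqg
  have hstep := aux_path hC hA hq
  have key : ∀ ε : ℝ, 0 < ε → ∃ r : ℝ, 0 < r ∧ ∀ N : ℕ, ∃ (y : X) (F : Finset X),
      (↑F ⊆ Metric.closedBall y r) ∧ (∀ a ∈ F, ∀ b ∈ F, a ≠ b → ε ≤ dist a b) ∧
      N ≤ F.card := by
    intro ε hε
    by_contra hcon
    push_neg at hcon
    apply h
    apply aux_bg ε hε
    intro r hr
    obtain ⟨N, hN⟩ := hcon r hr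
    refine ⟨N, fun x s hsub hsep => ?_⟩
    by_contra henc
    push_neg at henc
    obtain ⟨u, hus, huc⟩ := Set.exists_subset_encard_eq henc.le
    have hufin : u.Finite := Set.finite_of_encard_eq_coe huc
    have hcard : (hufin.toFinset.card : ℕ∞) = (N : ℕ∞) := by
      rw [← hufin.encard_eq_coe_toFinset_card, huc]
    have hcard' : hufin.toFinset.card = N := by exact_mod_cast hcard
    have hlt := hN x hufin.toFinset
      (by rw [Set.Finite.coe_toFinset]; exact hus.trans hsub)
      (by intro a ha b hb hab
          exact hsep a (hus (hufin.mem_toFinset.1 ha)) b (hus (hufin.mem_toFinset.1 hb)) hab)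
    omega
  rw [eq_top_iff, coarseEntropyAt]
  refine le_trans ?_ (le_iSup _ (C + A))
  refine le_trans ?_ (le_iSup _ (show (0:ℝ) < C + A by linarith))
  refine le_iInf fun R => le_iInf fun hR => ?_
  obtain ⟨r, hrpos, hbig⟩ := key R hR
  exact (aux_limsup_top x₀ hC hA hstep R r hrpos hbig).ge
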